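/- If m and n are finite multisets over a partially ordered set (X, >) with m pointwise greater than n (i.e., m = [x₁,…,xₖ] and n = [y₁,…,yₖ] with xᵢ > yᵢ for all i), then for every natural number k, m ⪰ k ⊗ n in the multiset order, where k ⊗ n denotes the k-fold sum n + ⋯ + n. -/

import Mathlib

namespace PointwiseMultiset

variable {X : Type*} [PartialOrder X]

/-- One step of the Dershowitz–Manna multiset order. -/
def MGt1 (m n : Multiset X) : Prop :=
  ∃ (m₀ nn : Multiset X) (x : X),
    m = m₀ + {x} ∧ n = m₀ + nn ∧ ∀ y ∈ nn, x > y

/-- The Dershowitz–Manna multiset order `≻`. -/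
def MGt (m n : Multiset X) : Prop := Relation.TransGen MGt1 m n

/-- Reflexive closure `⪰`. -/
def MGe (m n : Multiset X) : Prop := m = n ∨ MGt m n

/-- The pointwise multiset order `m :≻: n`. -/
def PWGt (m n : Multiset X) : Prop :=
  ∃ l₁ l₂ : List X, m = ↑l₁ ∧ n = ↑l₂ ∧ List.Forall₂ (· > ·) l₁ l₂

/-- `k ⊗ m`: the `k`-fold sum of `m`. -/
def ktimes : ℕ → Multiset X → Multiset X
  | 0, _ => 0
  | k + 1, m => m + ktimes k m

lemma mgt1_add_right {m n : Multiset X} (p : Multiset X) (h : MGt1 m n) :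
    MGt1 (m + p) (n + p) := by
  obtain ⟨m₀, nn, x, rfl, rfl, hx⟩ := h
  exact ⟨m₀ + p, nn, x, by abel, by abel, hx⟩

lemma mgt_add_right {m n : Multiset X} (p : Multiset X) (h : MGt m n) :
    MGt (m + p) (n + p) :=
  Relation.TransGen.lift (· + p) (fun _ _ => mgt1_add_right p) _ _ h

lemma mgt_add_left {m n : Multiset X} (p : Multiset X) (h : MGt m n) :
    MGt (p + m) (p + n) := by
  rw [add_comm p m, add_comm p n]; exact mgt_add_right p h

lemma mgt_add {m n m' n' : Multiset X} (h : MGt m n) (h' : MGe m' n') :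
    MGt (m + m') (n + n') := by
  rcases h' with rfl | h'
  · exact mgt_add_right m' h
  · exact (mgt_add_right m' h).trans (mgt_add_left n h')

lemma mgt_singleton_replicate {x y : X} (hxy : x > y) (k : ℕ) :
    MGt ({x} : Multiset X) (Multiset.replicate k y) := by
  refine Relation.TransGen.single ⟨0, Multiset.replicate k y, x, by simp, by simp, ?_⟩
  intro z hz
  rwa [Multiset.eq_of_mem_replicate hz]

lemma ktimes_zero (k : ℕ) : ktimes k (0 : Multiset X) = 0 := by
  induction k with
  | zero => rfl
  | succ k ih => simp [ktimes, ih]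

lemma ktimes_cons (k : ℕ) (y : X) (l : Multiset X) :
    ktimes k (y ::ₘ l) = Multiset.replicate k y + ktimes k l := by
  induction k with
  | zero => rfl
  | succ k ih =>
    simp only [ktimes, ih, Multiset.replicate_succ]
    rw [← Multiset.singleton_add y l, ← Multiset.singleton_add y (Multiset.replicate k y)]
    abel

lemma main_aux (k : ℕ) {l₁ l₂ : List X} (hf : List.Forall₂ (· > ·) l₁ l₂)
    (hne : l₁ ≠ []) : MGt (↑l₁ : Multiset X) (ktimes k (↑l₂ : Multiset X)) := by
  induction hf with
  | nil => exact absurd rfl hne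
  | cons hxy hf ih =>
    rename_i x y l₁ l₂
    rw [show ((↑(y :: l₂) : Multiset X)) = y ::ₘ ↑l₂ from rfl, ktimes_cons,
      show ((↑(x :: l₁) : Multiset X)) = {x} + ↑l₁ from (Multiset.cons_coe x l₁).symm.trans (Multiset.singleton_add x _).symm]
    rcases List.eq_nil_or_concat l₁ with rfl | _
    · cases hf
      rw [show ((([] : List X) : Multiset X)) = 0 from rfl, ktimes_zero, add_zero, add_zero]
      exact mgt_singleton_replicate hxy k
    · have hne' : l₁ ≠ [] := by rintro rfl; simp_all
      exact mgt_add (mgt_singleton_replicate hxy k) (Or.inr (ih hne'))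

/-- If `m :≻: n` then `m ⪰ k ⊗ n` for every `k`. -/
theorem pwGt_implies_mge_ktimes (m n : Multiset X) (h : PWGt m n) :
    ∀ k : ℕ, MGe m (ktimes k n) := by
  obtain ⟨l₁, l₂, rfl, rfl, hf⟩ := h
  intro k
  rcases List.eq_nil_or_concat l₁ with rfl | _
  · cases hf
    exact Or.inl (by rw [show ((([] : List X) : Multiset X)) = 0 from rfl, ktimes_zero])
  · have hne : l₁ ≠ [] := by rintro rfl; simp_all
    exact Or.inr (main_aux k hf hne)

end PointwiseMultiset
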